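/- arXiv:1911.07079 — 3 statements merged into one kernel-verified Lean document; each statement's English description precedes it below -/
import Mathlib

section
/- If h : X → Y is semi-α-continuous, then for every subset D ⊆ Y, interior(closure(interior(closure(h⁻¹(D))))) ⊆ h⁻¹(closure(D)). -/
theorem stmt_5 {X Y : Type*} [TopologicalSpace X] [TopologicalSpace Y] (h : X → Y)
    (hc : ∀ U : Set Y, IsOpen U → h ⁻¹' U ⊆ closure (interior (closure (interior (h ⁻¹' U)))))
    (D : Set Y) :
    interior (closure (interior (closure (h ⁻¹' D)))) ⊆ h ⁻¹' (closure D) := by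
  intro x hx
  by_contra hxc
  have hU : IsOpen (closure D)ᶜ := isClosed_closure.isOpen_compl
  have h1 := hc _ hU hxc
  have hsub : h ⁻¹' (closure D)ᶜ ⊆ (h ⁻¹' D)ᶜ := fun y hy hyD => hy (subset_closure hyD)
  have h2 : closure (interior (closure (interior (h ⁻¹' (closure D)ᶜ)))) ⊆
      (interior (closure (interior (closure (h ⁻¹' D)))))ᶜ := by
    calc closure (interior (closure (interior (h ⁻¹' (closure D)ᶜ))))
        ⊆ closure (interior (closure (interior (h ⁻¹' D)ᶜ))) :=
          closure_mono (interior_mono (closure_mono (interior_mono hsub)))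
      _ = (interior (closure (interior (closure (h ⁻¹' D)))))ᶜ := by
          rw [interior_compl, closure_compl, interior_compl, closure_compl]
  exact h2 h1 hx
end

section
/- If interior(closure(interior(closure(h⁻¹(D))))) ⊆ h⁻¹(closure(D)) holds for every subset D ⊆ Y, then h : X → Y is semi-α-continuous. -/
theorem stmt_6 {X Y : Type*} [TopologicalSpace X] [TopologicalSpace Y] (h : X → Y)
    (hc : ∀ D : Set Y, interior (closure (interior (closure (h ⁻¹' D)))) ⊆ h ⁻¹' (closure D)) :
    ∀ U : Set Y, IsOpen U → h ⁻¹' U ⊆ closure (interior (closure (interior (h ⁻¹' U)))) := by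
  intro U hU x hx
  have key := hc Uᶜ
  rw [hU.isClosed_compl.closure_eq] at key
  have hnot : x ∉ interior (closure (interior (closure (h ⁻¹' Uᶜ)))) :=
    fun hmem => key hmem hx
  simpa [Set.preimage_compl, closure_compl, interior_compl] using hnot
end

section
/- If h : X → Y is α*-continuous, open, and bijective, then h is semi-α*-continuous, i.e., the preimage of every semi-α-open set in Y is semi-α-open in X. -/
theorem stmt_11 {X Y : Type*} [TopologicalSpace X] [TopologicalSpace Y] (h : X → Y)
    (hstar : ∀ D : Set Y, D ⊆ interior (closure (interior D)) →
      h ⁻¹' D ⊆ interior (closure (interior (h ⁻¹' D))))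
    (hopen : ∀ U : Set X, IsOpen U → IsOpen (h '' U))
    (hbij : Function.Bijective h) :
    ∀ A : Set Y, (∃ P : Set Y, P ⊆ interior (closure (interior P)) ∧ P ⊆ A ∧ A ⊆ closure P) →
      ∃ Q : Set X, Q ⊆ interior (closure (interior Q)) ∧ Q ⊆ h ⁻¹' A ∧
        h ⁻¹' A ⊆ closure Q := by
  rintro A ⟨P, hPa, hPA, hAP⟩
  refine ⟨h ⁻¹' P, hstar P hPa, fun x hx => hPA hx, ?_⟩
  intro x hx
  rw [mem_closure_iff]
  intro U hU hxU
  have hy : h x ∈ closure P := hAP hx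
  rw [mem_closure_iff] at hy
  obtain ⟨y, hyU, hyP⟩ := hy (h '' U) (hopen U hU) ⟨x, hxU, rfl⟩
  obtain ⟨z, hzU, rfl⟩ := hyU
  exact ⟨z, hzU, hyP⟩
end
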